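/- Let S and A be nonempty finite sets, let γ ∈ [0,1), let π : S → PMF(A) be a policy, let ρ⁰ ∈ PMF(S), and let P, Q : S → A → PMF(S) be two transition kernels satisfying Σ_{s' ∈ S} |P(s,a)(s') − Q(s,a)(s')| ≤ L_P for every s ∈ S and a ∈ A, where L_P ≥ 0. Let d^π(·, P) and d^π(·, Q) denote the discounted state occupancy measures d^π(s, K) = (1−γ) · Σ_{k=0}^{∞} γ^k · μ_k^K(s), where μ₀^K = ρ⁰ and μ_{k+1}^K(s') = Σ_s μ_k^K(s) · Σ_a π(s)(a) · K(s,a)(s') for K ∈ {P, Q}. Then Σ_{s ∈ S} |d^π(s, P) − d^π(s, Q)| ≤ γ · L_P / (1−γ). -/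

import Mathlib

noncomputable section

/-- Policy-mixed one-step state-to-state kernel: `K^π(s'|s) = ∑_a π(s)(a) · K(s,a)(s')`. -/
def kerPi {S A : Type*} [Fintype A] (π : S → PMF A) (K : S → A → PMF S)
    (s s' : S) : ℝ :=
  ∑ a : A, ((π s) a).toReal * ((K s a) s').toReal

/-- State distribution at time step `k` under policy `π`, kernel `K` and initial
distribution `ρ`: `μ₀ = ρ`, `μ_{k+1}(s') = ∑_s μ_k(s) · ∑_a π(s)(a) · K(s,a)(s')`. -/
def stateDist {S A : Type*} [Fintype S] [Fintype A] (π : S → PMF A)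
    (K : S → A → PMF S) (ρ : PMF S) : ℕ → S → ℝ
  | 0 => fun s => (ρ s).toReal
  | (k + 1) => fun s' => ∑ s : S, stateDist π K ρ k s * kerPi π K s s'

/-- Discounted state occupancy measure `d^π(s) = (1-γ) ∑_{k≥0} γ^k μ_k(s)`. -/
def occ {S A : Type*} [Fintype S] [Fintype A] (γ : ℝ) (π : S → PMF A)
    (K : S → A → PMF S) (ρ : PMF S) (s : S) : ℝ :=
  (1 - γ) * ∑' k : ℕ, γ ^ k * stateDist π K ρ k s

/-- Expected discounted return
`J(π, K, r) = ∑_{k≥0} γ^k ∑_s μ_k(s) ∑_a π(s)(a) r(s,a)`. -/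
def ret {S A : Type*} [Fintype S] [Fintype A] (γ : ℝ) (π : S → PMF A)
    (K : S → A → PMF S) (ρ : PMF S) (r : S × A → ℝ) : ℝ :=
  ∑' k : ℕ, γ ^ k * ∑ s : S, stateDist π K ρ k s * ∑ a : A, ((π s) a).toReal * r (s, a)

lemma pmf_sum_toReal {S : Type*} [Fintype S] (p : PMF S) :
    ∑ s : S, (p s).toReal = 1 := by
  have h1 : ∑ s : S, p s = 1 := by rw [← tsum_fintype (L := SummationFilter.unconditional S)]; exact p.tsum_coe
  have h2 : (∑ s : S, p s).toReal = ∑ s : S, (p s).toReal :=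
    ENNReal.toReal_sum fun a _ => p.apply_ne_top a
  rw [← h2, h1, ENNReal.toReal_one]

lemma kerPi_nonneg {S A : Type*} [Fintype A] (π : S → PMF A) (K : S → A → PMF S)
    (s s' : S) : 0 ≤ kerPi π K s s' :=
  Finset.sum_nonneg fun a _ => mul_nonneg ENNReal.toReal_nonneg ENNReal.toReal_nonneg

lemma kerPi_sum {S A : Type*} [Fintype S] [Fintype A] (π : S → PMF A)
    (K : S → A → PMF S) (s : S) : ∑ s' : S, kerPi π K s s' = 1 := by
  unfold kerPi
  rw [Finset.sum_comm]
  calc ∑ a : A, ∑ s' : S, ((π s) a).toReal * ((K s a) s').toReal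
      = ∑ a : A, ((π s) a).toReal * ∑ s' : S, ((K s a) s').toReal := by
        simp [Finset.mul_sum]
    _ = ∑ a : A, ((π s) a).toReal := by
        simp [pmf_sum_toReal]
    _ = 1 := pmf_sum_toReal (π s)

lemma stateDist_nonneg {S A : Type*} [Fintype S] [Fintype A] (π : S → PMF A)
    (K : S → A → PMF S) (ρ : PMF S) : ∀ k s, 0 ≤ stateDist π K ρ k s
  | 0, s => ENNReal.toReal_nonneg
  | (k+1), s' => Finset.sum_nonneg fun s _ =>
      mul_nonneg (stateDist_nonneg π K ρ k s) (kerPi_nonneg π K s s')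

lemma stateDist_sum {S A : Type*} [Fintype S] [Fintype A] (π : S → PMF A)
    (K : S → A → PMF S) (ρ : PMF S) : ∀ k, ∑ s : S, stateDist π K ρ k s = 1
  | 0 => pmf_sum_toReal ρ
  | (k+1) => by
      show ∑ s' : S, ∑ s : S, stateDist π K ρ k s * kerPi π K s s' = 1
      rw [Finset.sum_comm]
      calc ∑ s : S, ∑ s' : S, stateDist π K ρ k s * kerPi π K s s'
          = ∑ s : S, stateDist π K ρ k s * ∑ s' : S, kerPi π K s s' := by
            simp [Finset.mul_sum]
        _ = 1 := by simp [kerPi_sum, stateDist_sum π K ρ k]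

lemma stateDist_le_one {S A : Type*} [Fintype S] [Fintype A] (π : S → PMF A)
    (K : S → A → PMF S) (ρ : PMF S) (k : ℕ) (s : S) : stateDist π K ρ k s ≤ 1 := by
  have := stateDist_sum π K ρ k
  calc stateDist π K ρ k s ≤ ∑ s' : S, stateDist π K ρ k s' :=
        Finset.single_le_sum (fun s' _ => stateDist_nonneg π K ρ k s') (Finset.mem_univ s)
    _ = 1 := this

lemma kerPi_l1 {S A : Type*} [Fintype S] [Fintype A] (π : S → PMF A)
    (P Q : S → A → PMF S) (L_P : ℝ)
    (h : ∀ s : S, ∀ a : A, ∑ s' : S, |((P s a) s').toReal - ((Q s a) s').toReal| ≤ L_P)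
    (s : S) : ∑ s' : S, |kerPi π P s s' - kerPi π Q s s'| ≤ L_P := by
  calc ∑ s' : S, |kerPi π P s s' - kerPi π Q s s'|
      ≤ ∑ s' : S, ∑ a : A, ((π s) a).toReal * |((P s a) s').toReal - ((Q s a) s').toReal| := by
        apply Finset.sum_le_sum
        intro s' _
        unfold kerPi
        rw [← Finset.sum_sub_distrib]
        refine (Finset.abs_sum_le_sum_abs _ _).trans ?_
        apply Finset.sum_le_sum
        intro a _
        rw [← mul_sub, abs_mul, abs_of_nonneg ENNReal.toReal_nonneg]
    _ = ∑ a : A, ((π s) a).toReal * ∑ s' : S, |((P s a) s').toReal - ((Q s a) s').toReal| := by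
        rw [Finset.sum_comm]; simp [Finset.mul_sum]
    _ ≤ ∑ a : A, ((π s) a).toReal * L_P := by
        apply Finset.sum_le_sum
        intro a _
        exact mul_le_mul_of_nonneg_left (h s a) ENNReal.toReal_nonneg
    _ = L_P := by rw [← Finset.sum_mul, pmf_sum_toReal, one_mul]

lemma stateDist_l1 {S A : Type*} [Fintype S] [Fintype A] (π : S → PMF A)
    (ρ : PMF S) (P Q : S → A → PMF S) (L_P : ℝ) (hL : 0 ≤ L_P)
    (h : ∀ s : S, ∀ a : A, ∑ s' : S, |((P s a) s').toReal - ((Q s a) s').toReal| ≤ L_P) :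
    ∀ k, ∑ s : S, |stateDist π P ρ k s - stateDist π Q ρ k s| ≤ k * L_P
  | 0 => by simp [stateDist]
  | (k+1) => by
      have ih := stateDist_l1 π ρ P Q L_P hL h k
      have key : ∀ s' : S, |stateDist π P ρ (k+1) s' - stateDist π Q ρ (k+1) s'| ≤
          (∑ s : S, |stateDist π P ρ k s - stateDist π Q ρ k s| * kerPi π P s s') +
          ∑ s : S, stateDist π Q ρ k s * |kerPi π P s s' - kerPi π Q s s'| := by
        intro s'
        have hdec : stateDist π P ρ (k+1) s' - stateDist π Q ρ (k+1) s' =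
            (∑ s : S, (stateDist π P ρ k s - stateDist π Q ρ k s) * kerPi π P s s') +
            ∑ s : S, stateDist π Q ρ k s * (kerPi π P s s' - kerPi π Q s s') := by
          show (∑ s : S, stateDist π P ρ k s * kerPi π P s s') -
              (∑ s : S, stateDist π Q ρ k s * kerPi π Q s s') = _
          rw [← Finset.sum_add_distrib, ← Finset.sum_sub_distrib]
          apply Finset.sum_congr rfl
          intro s _
          ring
        rw [hdec]
        refine (abs_add_le _ _).trans (add_le_add ?_ ?_)
        · refine (Finset.abs_sum_le_sum_abs _ _).trans ?_
          apply le_of_eq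
          apply Finset.sum_congr rfl
          intro s _
          rw [abs_mul, abs_of_nonneg (kerPi_nonneg π P s s')]
        · refine (Finset.abs_sum_le_sum_abs _ _).trans ?_
          apply le_of_eq
          apply Finset.sum_congr rfl
          intro s _
          rw [abs_mul, abs_of_nonneg (stateDist_nonneg π Q ρ k s)]
      calc ∑ s' : S, |stateDist π P ρ (k+1) s' - stateDist π Q ρ (k+1) s'|
          ≤ ∑ s' : S, ((∑ s : S, |stateDist π P ρ k s - stateDist π Q ρ k s| * kerPi π P s s') +
            ∑ s : S, stateDist π Q ρ k s * |kerPi π P s s' - kerPi π Q s s'|) :=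
            Finset.sum_le_sum fun s' _ => key s'
        _ = (∑ s : S, |stateDist π P ρ k s - stateDist π Q ρ k s| * ∑ s' : S, kerPi π P s s') +
            ∑ s : S, stateDist π Q ρ k s * ∑ s' : S, |kerPi π P s s' - kerPi π Q s s'| := by
            rw [Finset.sum_add_distrib, Finset.sum_comm]
            congr 1
            · simp [Finset.mul_sum]
            · rw [Finset.sum_comm]; simp [Finset.mul_sum]
        _ ≤ (∑ s : S, |stateDist π P ρ k s - stateDist π Q ρ k s|) +
            ∑ s : S, stateDist π Q ρ k s * L_P := by
            apply add_le_add
            · apply le_of_eq; simp [kerPi_sum]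
            · apply Finset.sum_le_sum
              intro s _
              exact mul_le_mul_of_nonneg_left (kerPi_l1 π P Q L_P h s)
                (stateDist_nonneg π Q ρ k s)
        _ = (∑ s : S, |stateDist π P ρ k s - stateDist π Q ρ k s|) + L_P := by
            rw [← Finset.sum_mul, stateDist_sum, one_mul]
        _ ≤ k * L_P + L_P := by linarith
        _ = (k+1 : ℕ) * L_P := by push_cast; ring

theorem occ_l1_le {S A : Type*} [Fintype S] [Fintype A] [Nonempty S] [Nonempty A]
    (γ : ℝ) (hγ0 : 0 ≤ γ) (hγ1 : γ < 1)
    (π : S → PMF A) (ρ : PMF S)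
    (P Q : S → A → PMF S)
    (L_P : ℝ) (hL : 0 ≤ L_P)
    (h : ∀ s : S, ∀ a : A, ∑ s' : S, |((P s a) s').toReal - ((Q s a) s').toReal| ≤ L_P) :
    ∑ s : S, |occ γ π P ρ s - occ γ π Q ρ s| ≤ γ * L_P / (1 - γ) := by
  have hγ : |γ| < 1 := by rw [abs_of_nonneg hγ0]; exact hγ1
  have h1γ : (0:ℝ) < 1 - γ := by linarith
  -- summability facts
  have hsum : ∀ (K : S → A → PMF S) (s : S),
      Summable (fun k : ℕ => γ ^ k * stateDist π K ρ k s) := by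
    intro K s
    apply Summable.of_norm_bounded (summable_geometric_of_lt_one hγ0 hγ1)
    intro k
    rw [Real.norm_eq_abs, abs_mul, abs_of_nonneg (pow_nonneg hγ0 k),
      abs_of_nonneg (stateDist_nonneg π K ρ k s)]
    calc γ ^ k * stateDist π K ρ k s ≤ γ ^ k * 1 :=
          mul_le_mul_of_nonneg_left (stateDist_le_one π K ρ k s) (pow_nonneg hγ0 k)
      _ = γ ^ k := mul_one _
  have hsumd : ∀ s : S, Summable (fun k : ℕ =>
      γ ^ k * |stateDist π P ρ k s - stateDist π Q ρ k s|) := by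
    intro s
    apply Summable.of_norm_bounded ((summable_geometric_of_lt_one hγ0 hγ1).mul_left 2)
    intro k
    rw [Real.norm_eq_abs, abs_mul, abs_abs, abs_of_nonneg (pow_nonneg hγ0 k)]
    have h1 : |stateDist π P ρ k s - stateDist π Q ρ k s| ≤ 2 := by
      have := abs_sub (stateDist π P ρ k s) (stateDist π Q ρ k s)
      have hp := stateDist_le_one π P ρ k s
      have hq := stateDist_le_one π Q ρ k s
      have hp0 := stateDist_nonneg π P ρ k s
      have hq0 := stateDist_nonneg π Q ρ k s
      rw [abs_sub_le_iff]
      constructor <;> linarith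
    calc γ ^ k * |stateDist π P ρ k s - stateDist π Q ρ k s| ≤ γ ^ k * 2 :=
          mul_le_mul_of_nonneg_left h1 (pow_nonneg hγ0 k)
      _ = 2 * γ ^ k := by ring
  have hkgeom : Summable (fun k : ℕ => γ ^ k * ((k : ℝ) * L_P)) := by
    have h2 : Summable (fun k : ℕ => (k : ℝ) * γ ^ k) := by
      have := summable_pow_mul_geometric_of_norm_lt_one (R := ℝ) 1 hγ
      exact this.congr (by simp)
    exact (h2.mul_right L_P).congr (fun k => by ring)
  have hlhs : Summable (fun k : ℕ =>
      γ ^ k * ∑ s : S, |stateDist π P ρ k s - stateDist π Q ρ k s|) := by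
    refine Summable.of_nonneg_of_le (fun k => mul_nonneg (pow_nonneg hγ0 k)
      (Finset.sum_nonneg fun s _ => abs_nonneg _)) (fun k => ?_) hkgeom
    exact mul_le_mul_of_nonneg_left (stateDist_l1 π ρ P Q L_P hL h k) (pow_nonneg hγ0 k)
  calc ∑ s : S, |occ γ π P ρ s - occ γ π Q ρ s|
      = ∑ s : S, |(1 - γ) * ∑' k : ℕ, γ ^ k * (stateDist π P ρ k s - stateDist π Q ρ k s)| := by
        apply Finset.sum_congr rfl
        intro s _
        unfold occ
        rw [← mul_sub, ← Summable.tsum_sub (hsum P s) (hsum Q s)]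
        simp only [← mul_sub]
    _ ≤ ∑ s : S, (1 - γ) * ∑' k : ℕ, γ ^ k * |stateDist π P ρ k s - stateDist π Q ρ k s| := by
        apply Finset.sum_le_sum
        intro s _
        rw [abs_mul, abs_of_nonneg (le_of_lt h1γ)]
        apply mul_le_mul_of_nonneg_left _ (le_of_lt h1γ)
        rw [← Real.norm_eq_abs]
        have hn : Summable (fun k : ℕ =>
            ‖γ ^ k * (stateDist π P ρ k s - stateDist π Q ρ k s)‖) :=
          (hsumd s).congr (fun k => by
            rw [Real.norm_eq_abs, abs_mul, abs_of_nonneg (pow_nonneg hγ0 k)])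
        refine (norm_tsum_le_tsum_norm hn).trans (le_of_eq ?_)
        apply tsum_congr
        intro k
        rw [Real.norm_eq_abs, abs_mul, abs_of_nonneg (pow_nonneg hγ0 k)]
    _ = (1 - γ) * ∑' k : ℕ, γ ^ k * ∑ s : S, |stateDist π P ρ k s - stateDist π Q ρ k s| := by
        rw [← Finset.mul_sum]
        congr 1
        rw [← Summable.tsum_finsetSum (fun s _ => hsumd s)]
        apply tsum_congr
        intro k
        rw [Finset.mul_sum]
    _ ≤ (1 - γ) * ∑' k : ℕ, γ ^ k * ((k : ℝ) * L_P) := by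
        apply mul_le_mul_of_nonneg_left _ (le_of_lt h1γ)
        refine Summable.tsum_le_tsum (fun k => ?_) hlhs hkgeom
        exact mul_le_mul_of_nonneg_left (stateDist_l1 π ρ P Q L_P hL h k) (pow_nonneg hγ0 k)
    _ = (1 - γ) * (L_P * (γ / (1 - γ)^2)) := by
        congr 1
        rw [← tsum_coe_mul_geometric_of_norm_lt_one hγ, ← tsum_mul_left]
        apply tsum_congr
        intro k
        ring
    _ = γ * L_P / (1 - γ) := by
        field_simp
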